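/- If B ⊆ (0,∞) is a Borel set with positive Lebesgue measure on every interval (0,d) (i.e., Leb(B ∩ (0,d)) > 0 for all d > 0) and B + B ⊆ B, then B = (0, ∞). -/
import Mathlib


open MeasureTheory Pointwise ENNReal

/-- Steinhaus-type theorem for sums: if `A` is measurable with positive Lebesgue measure,
then `A + A` contains a nonempty open interval. -/
lemma sum_steinhaus (A : Set ℝ) (hA : MeasurableSet A) (hApos : 0 < volume A) :
    ∃ u v : ℝ, u < v ∧ Set.Ioo u v ⊆ A + A := by
  haveI : Filter.NeBot (ae (volume.restrict A)) := by
    rw [ae_neBot, ← Measure.measure_univ_eq_zero.ne]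
    simp only [Measure.restrict_apply_univ]
    exact hApos.ne'
  obtain ⟨a, hden, haA⟩ :=
    ((Besicovitch.ae_tendsto_measure_inter_div volume A).and (ae_restrict_mem hA)).exists
  -- choose a small radius with density > 3/4
  have h34 : (3/4 : ℝ≥0∞) < 1 := by
    rw [ENNReal.div_lt_iff (by norm_num) (by norm_num)]; norm_num
  have hev : ∀ᶠ r in nhdsWithin (0:ℝ) (Set.Ioi 0),
      (3/4 : ℝ≥0∞) < volume (A ∩ Metric.closedBall a r) / volume (Metric.closedBall a r) :=
    hden.eventually (eventually_gt_nhds h34)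
  obtain ⟨r, hrd, hr⟩ := (hev.and (eventually_mem_nhdsWithin)).exists
  rw [Set.mem_Ioi] at hr
  -- the key measure bound
  have hcb : volume (Metric.closedBall a r) = ENNReal.ofReal (2 * r) :=
    Real.volume_closedBall a r
  have hkey : ENNReal.ofReal (3/2 * r) < volume (A ∩ Metric.closedBall a r) := by
    rw [ENNReal.lt_div_iff_mul_lt (Or.inl (by rw [hcb]; simp [hr.le]; positivity))
      (Or.inl (by rw [hcb]; exact ENNReal.ofReal_ne_top))] at hrd
    calc ENNReal.ofReal (3/2 * r) = (3/4 : ℝ≥0∞) * ENNReal.ofReal (2 * r) := by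
          rw [show (3/4 : ℝ≥0∞) = ENNReal.ofReal (3/4) by
            rw [ENNReal.ofReal_div_of_pos (by norm_num)]; norm_num,
            ← ENNReal.ofReal_mul (by norm_num)]
          ring_nf
      _ = (3/4 : ℝ≥0∞) * volume (Metric.closedBall a r) := by rw [hcb]
      _ < volume (A ∩ Metric.closedBall a r) := hrd
  refine ⟨2*a - r/2, 2*a + r/2, by linarith, ?_⟩
  intro t ht
  obtain ⟨ht1, ht2⟩ := ht
  set S1 := A ∩ Metric.closedBall a r with hS1
  set S2 := (fun p => t - p) ⁻¹' S1 with hS2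
  have hS1meas : MeasurableSet S1 := hA.inter measurableSet_closedBall
  have hS2meas : MeasurableSet S2 :=
    hS1meas.preimage (measurable_const.sub measurable_id)
  have hS2vol : volume S2 = volume S1 :=
    (Measure.measurePreserving_sub_left volume t).measure_preimage hS1meas.nullMeasurableSet
  have hS1sub : S1 ⊆ Metric.closedBall a (3/2 * r) :=
    Set.inter_subset_right.trans (Metric.closedBall_subset_closedBall (by linarith))
  have hS2sub : S2 ⊆ Metric.closedBall a (3/2 * r) := by
    intro p hp
    have h1 : t - p ∈ Metric.closedBall a r := hp.2
    rw [Metric.mem_closedBall, Real.dist_eq, abs_le] at h1 ⊢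
    constructor <;> [linarith [h1.2, ht1]; linarith [h1.1, ht2]]
  -- S1 and S2 must intersect
  have hne : (S1 ∩ S2).Nonempty := by
    rw [Set.nonempty_iff_ne_empty]
    intro hdisj
    have hU : volume (S1 ∪ S2) ≤ ENNReal.ofReal (2 * (3/2 * r)) := by
      rw [← Real.volume_closedBall a (3/2 * r)]
      exact measure_mono (Set.union_subset hS1sub hS2sub)
    rw [measure_union (Set.disjoint_iff_inter_eq_empty.mpr hdisj) hS2meas, hS2vol] at hU
    have : ENNReal.ofReal (2 * (3/2 * r)) < volume S1 + volume S1 := by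
      calc ENNReal.ofReal (2 * (3/2 * r))
          = ENNReal.ofReal (3/2 * r) + ENNReal.ofReal (3/2 * r) := by
            rw [← ENNReal.ofReal_add (by positivity) (by positivity)]; ring_nf
        _ < volume S1 + volume S1 := by
            exact ENNReal.add_lt_add hkey hkey
    exact absurd (lt_of_lt_of_le this hU) (lt_irrefl _)
  obtain ⟨p, hp1, hp2⟩ := hne
  have : p + (t - p) ∈ A + A := Set.add_mem_add hp1.1 hp2.1
  simpa using this

/-- Every small positive interval threshold: `B` contains an open interval `(u,v)` with
`0 ≤ u < v ≤ ε`. -/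
lemma exists_Ioo_subset (B : Set ℝ) (hB : B ⊆ Set.Ioi 0) (hmeas : MeasurableSet B)
    (hpos : ∀ d : ℝ, 0 < d → 0 < volume (B ∩ Set.Ioo 0 d))
    (hadd : B + B ⊆ B) (ε : ℝ) (hε : 0 < ε) :
    ∃ u v : ℝ, 0 ≤ u ∧ u < v ∧ v ≤ ε ∧ Set.Ioo u v ⊆ B := by
  set A := B ∩ Set.Ioo 0 (ε/2) with hA
  have hAmeas : MeasurableSet A := hmeas.inter measurableSet_Ioo
  obtain ⟨u, v, huv, hsub⟩ := sum_steinhaus A hAmeas (hpos _ (by linarith))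
  have hAB : A ⊆ B := Set.inter_subset_left
  have hsubB : Set.Ioo u v ⊆ B := fun x hx =>
    hadd (Set.add_subset_add hAB hAB (hsub hx))
  have hrange : ∀ x ∈ Set.Ioo u v, 0 < x ∧ x < ε := by
    intro x hx
    obtain ⟨p, hp, q, hq, rfl⟩ := hsub hx
    obtain ⟨hp1, hp2⟩ := hp.2
    obtain ⟨hq1, hq2⟩ := hq.2
    exact ⟨show 0 < p + q by linarith, show p + q < ε by linarith⟩
  have hu : 0 ≤ u := by
    by_contra hu
    push_neg at hu
    have hm3 : u < min 0 v := lt_min hu huv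
    have hm1 : min 0 v ≤ 0 := min_le_left _ _
    have hm2 : min 0 v ≤ v := min_le_right _ _
    have hmem : (u + min 0 v)/2 ∈ Set.Ioo u v := ⟨by linarith, by linarith⟩
    have := (hrange _ hmem).1
    linarith
  have hv : v ≤ ε := by
    by_contra hv
    push_neg at hv
    have hm3 : max u ε < v := max_lt huv hv
    have hm1 : ε ≤ max u ε := le_max_right _ _
    have hm2 : u ≤ max u ε := le_max_left _ _
    have hmem : (max u ε + v)/2 ∈ Set.Ioo u v := ⟨by linarith, by linarith⟩
    have := (hrange _ hmem).2
    linarith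
  exact ⟨u, v, hu, huv, hv, hsubB⟩

/-- Covering lemma: given two intervals inside `B` with the second shorter than the first's
length, everything above `u` is in `B`. -/
lemma cover_above (B : Set ℝ) (hadd : B + B ⊆ B) {u v u' v' : ℝ}
    (h1 : Set.Ioo u v ⊆ B) (h2 : Set.Ioo u' v' ⊆ B)
    (hu' : 0 ≤ u') (hu'v' : u' < v') (hgap : u' < v - u) :
    ∀ y : ℝ, u < y → y ∈ B := by
  have huv : u < v := by linarith
  have key : ∀ k : ℕ, Set.Ioo (u + k * u') (v + k * v') ⊆ B := by
    intro k
    induction k with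
    | zero => simpa using h1
    | succ n ih =>
      intro y hy
      obtain ⟨hy1, hy2⟩ := hy
      push_cast at hy1 hy2
      set w := (max u' (y - v - n*v') + min v' (y - u - n*u'))/2 with hw
      have hb1 : u' ≤ max u' (y - v - n*v') := le_max_left _ _
      have hb2 : y - v - n*v' ≤ max u' (y - v - n*v') := le_max_right _ _
      have hb3 : min v' (y - u - n*u') ≤ v' := min_le_left _ _
      have hb4 : min v' (y - u - n*u') ≤ y - u - n*u' := min_le_right _ _
      have hmax : max u' (y - v - n*v') < min v' (y - u - n*u') := by
        have hnn : (n:ℝ) * u' ≤ (n:ℝ) * v' :=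
          mul_le_mul_of_nonneg_left hu'v'.le (Nat.cast_nonneg n)
        apply max_lt <;> apply lt_min <;> linarith
      have hwmem : w ∈ Set.Ioo u' v' := ⟨by rw [hw]; linarith, by rw [hw]; linarith⟩
      have hzmem : y - w ∈ Set.Ioo (u + n*u') (v + n*v') := by
        constructor <;> rw [hw] <;> linarith
      have : (y - w) + w ∈ B + B := Set.add_mem_add (ih hzmem) (h2 hwmem)
      simpa using hadd this
  intro y hy
  have hv' : 0 < v' := lt_of_le_of_lt hu' hu'v'
  have hP : ∃ k : ℕ, y < v + k * v' := by
    obtain ⟨k, hk⟩ := exists_nat_gt ((y - v)/v')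
    refine ⟨k, ?_⟩
    rw [div_lt_iff₀ hv'] at hk
    linarith
  set K := Nat.find hP with hK
  have hKspec : y < v + K * v' := Nat.find_spec hP
  apply key K
  refine ⟨?_, hKspec⟩
  rcases Nat.eq_zero_or_pos K with h0 | hKpos
  · rw [h0]; simpa using hy
  · obtain ⟨m, hm⟩ := Nat.exists_eq_succ_of_ne_zero hKpos.ne'
    have hmin : ¬ (y < v + m * v') := Nat.find_min hP (by omega)
    push_neg at hmin
    have hnn : (m:ℝ) * u' ≤ (m:ℝ) * v' :=
      mul_le_mul_of_nonneg_left hu'v'.le (Nat.cast_nonneg m)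
    rw [hm]
    push_cast
    linarith

/-- If `B ⊆ (0,∞)` is a Borel set with `Leb(B ∩ (0,d)) > 0` for every `d > 0` and
`B + B ⊆ B`, then `B = (0,∞)`. -/
theorem stmt11 (B : Set ℝ) (hB : B ⊆ Set.Ioi 0) (hmeas : MeasurableSet B)
    (hpos : ∀ d : ℝ, 0 < d → 0 < volume (B ∩ Set.Ioo 0 d))
    (hadd : B + B ⊆ B) :
    B = Set.Ioi 0 := by
  apply Set.Subset.antisymm hB
  intro x hx
  rw [Set.mem_Ioi] at hx
  obtain ⟨u, v, hu, huv, hvx, h1⟩ := exists_Ioo_subset B hB hmeas hpos hadd x hx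
  obtain ⟨u', v', hu', hu'v', hv', h2⟩ :=
    exists_Ioo_subset B hB hmeas hpos hadd (v - u) (by linarith)
  have hgap : u' < v - u := lt_of_lt_of_le hu'v' hv'
  exact cover_above B hadd h1 h2 hu' hu'v' hgap x (lt_of_lt_of_le huv hvx)
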